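/- arXiv:2105.02547 — 2 statements merged into one kernel-verified Lean document; each statement's English description precedes it below -/
import Mathlib

section
/- Let K, ℓ, f_{λλ} ∈ ℝ with K ≠ 0, let A = Σ_{σ,τ∈L} f_{στ} ≠ 0 (sums over a subset L ⊆ Σ of a finite index set Σ, with symmetric coefficients f_{στ} = f_{τσ}), and set d = −ℓ/K, R = −(Σ_{σ,τ∈Σ} f_{στ} ℓ² − K (Σ_{σ∈Σ} f_{σλ}) ℓ + K² f_{λλ})/K³. Suppose Σ_{τ∉L} a_τ = K (the coefficients a_σ vanish in total over L). Define B = Σ_{σ∈L} f_{σλ} + 2 (Σ_{σ∈L, τ∉L} f_{στ}) d, C' = (Σ_{τ∉L} a_τ) R + (Σ_{τ∉L} f_{τλ}) d + (Σ_{σ,τ∉L} f_{στ}) d² + f_{λλ}, and E = Σ_{σ∈L} f_{σλ} − 2 (ℓ/K) Σ_{σ∈Σ, τ∈L} f_{στ}. Then B² − 4 A C' = E², and the two roots (−B ± E)/(2A) of the quadratic A y² + B y + C' equal −ℓ/K and (ℓ/K)(1 + 2 (Σ_{σ∈L, τ∉L} f_{στ})/A) − (Σ_{σ∈L} f_{σλ})/A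 respectively. -/
/-- The discriminant identity `B² − 4AC' = E²` from the transcritical
bifurcation analysis (Lemma A.1 of the paper), together with the explicit values
of the two roots `(−B ± E)/(2A)` of the quadratic `A y² + B y + C'`. -/
theorem discriminant_identity {ι : Type*} [Fintype ι] [DecidableEq ι]
    (L : Finset ι) (a : ι → ℝ) (F : ι → ι → ℝ) (fl : ι → ℝ)
    (ell fll K : ℝ)
    (hsym : ∀ σ τ : ι, F σ τ = F τ σ)
    (hK : K ≠ 0)
    (haK : ∑ τ ∈ Lᶜ, a τ = K)
    (A B C' E d R : ℝ)
    (hA : A = ∑ σ ∈ L, ∑ τ ∈ L, F σ τ)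
    (hA0 : A ≠ 0)
    (hd : d = -ell / K)
    (hR : R = -((∑ σ, ∑ τ, F σ τ) * ell ^ 2 - K * (∑ σ, fl σ) * ell
        + K ^ 2 * fll) / K ^ 3)
    (hB : B = (∑ σ ∈ L, fl σ) + 2 * (∑ σ ∈ L, ∑ τ ∈ Lᶜ, F σ τ) * d)
    (hC : C' = (∑ τ ∈ Lᶜ, a τ) * R + (∑ τ ∈ Lᶜ, fl τ) * d
        + (∑ σ ∈ Lᶜ, ∑ τ ∈ Lᶜ, F σ τ) * d ^ 2 + fll)
    (hE : E = (∑ σ ∈ L, fl σ) - 2 * (ell / K) * (∑ σ, ∑ τ ∈ L, F σ τ)) :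
    B ^ 2 - 4 * A * C' = E ^ 2 ∧
    (-B + E) / (2 * A) = -ell / K ∧
    (-B - E) / (2 * A) =
      (ell / K) * (1 + 2 * (∑ σ ∈ L, ∑ τ ∈ Lᶜ, F σ τ) / A)
        - (∑ σ ∈ L, fl σ) / A := by
  set m := ∑ σ ∈ L, ∑ τ ∈ Lᶜ, F σ τ with hm
  set n := ∑ σ ∈ Lᶜ, ∑ τ ∈ Lᶜ, F σ τ with hn
  set p := ∑ σ ∈ L, fl σ with hp
  set q := ∑ σ ∈ Lᶜ, fl σ with hq
  have hcross : ∑ σ ∈ Lᶜ, ∑ τ ∈ L, F σ τ = m := by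
    rw [hm, Finset.sum_comm]
    exact Finset.sum_congr rfl fun σ _ => Finset.sum_congr rfl fun τ _ => (hsym σ τ).symm
  have hrow : ∀ g : ι → ℝ, (∑ σ, g σ) = (∑ σ ∈ L, g σ) + ∑ σ ∈ Lᶜ, g σ := by
    intro g; rw [Finset.sum_add_sum_compl]
  have hT : (∑ σ, ∑ τ, F σ τ) = A + 2 * m + n := by
    rw [hrow fun σ => ∑ τ, F σ τ]
    have h1 : ∀ σ, (∑ τ, F σ τ) = (∑ τ ∈ L, F σ τ) + ∑ τ ∈ Lᶜ, F σ τ :=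
      fun σ => hrow _
    simp only [h1, Finset.sum_add_distrib]
    rw [hcross, hA]; ring
  have hTL : (∑ σ, ∑ τ ∈ L, F σ τ) = A + m := by
    rw [hrow fun σ => ∑ τ ∈ L, F σ τ, hcross, hA]
  have hfl : (∑ σ, fl σ) = p + q := hrow fl
  rw [hT] at hR
  rw [hTL] at hE
  rw [hfl] at hR
  rw [haK] at hC
  subst hd hR hB hC hE
  refine ⟨?_, ?_, ?_⟩ <;> field_simp <;> ring
end

section
/- Let C be the cell set of a feedforward network, B ⊆ C a subnetwork, and for p ∈ C define μ_p = 0 if p ∈ B, and otherwise μ_p = (max over cells b ∈ B and loop-free paths ω from b to p of the number of critical cells q ∈ ω with q ∉ B) − 1, where 'critical' is a fixed predicate on cells such that every p ∉ B with all q ⊳ p in B is critical, and such that every p ∉ B lies on a path from some cell of B. Then μ satisfies the recursion: μ_p = 0 for p ∈ B; μ_p = 0 for p ∉ B with q ∈ B for all q ⊳ p; μ_p = max_{q ⊳ p} μ_q if p ∉ B is non-critical; and μ_p = max_{q ⊳ p} μ_q + 1 if p ∉ B is critical and some q ⊳ p lies outside B. -/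
/-- `netStep S p q` : cell `p` receives an input (arrow) from `q`. -/
def netStep {C : Type*} (S : Finset (C → C)) (p q : C) : Prop := ∃ σ ∈ S, σ p = q

/-- `netLE S p q` : there is a path from `q` to `p` (the relation `p ⊴ q`). -/
def netLE {C : Type*} (S : Finset (C → C)) (p q : C) : Prop :=
  Relation.ReflTransGen (netStep S) p q

/-- A cycle of length `≥ 2`: pairwise distinct cells in a closed chain of arrows. -/
def HasCycle {C : Type*} (S : Finset (C → C)) : Prop :=
  ∃ (k : ℕ) (ω : Fin (k + 2) → C), Function.Injective ω ∧
    netStep S (ω (Fin.last (k + 1))) (ω 0) ∧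
    ∀ i : Fin (k + 1), netStep S (ω i.castSucc) (ω i.succ)

open scoped Classical

set_option linter.unusedSectionVars false
namespace FFAux

variable {C : Type*} [Fintype C] [DecidableEq C] {S : Finset (C → C)}

lemma mem_netLE_head {l : List C} (hc : l.Chain' fun a b => netStep S b a)
    {x : C} (hx : x ∈ l) (h : l ≠ []) : netLE S x (l.head h) := by
  induction l with
  | nil => cases hx
  | cons a t ih =>
    rcases List.mem_cons.mp hx with rfl | hx'
    · exact Relation.ReflTransGen.refl
    · cases t with
      | nil => cases hx'
      | cons c t' =>
        have hc' := List.isChain_cons_cons.mp hc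
        exact (ih hc'.2 hx' (by simp)).tail hc'.1

lemma getLast_netLE_mem :
    ∀ {l : List C}, (l.Chain' fun a b => netStep S b a) → ∀ (h : l ≠ []) (x : C), x ∈ l →
      netLE S (l.getLast h) x := by
  intro l
  induction l with
  | nil => intro _ h; exact absurd rfl h
  | cons a t ih =>
    intro hc h x hx
    cases t with
    | nil =>
      simp only [List.mem_singleton] at hx
      subst hx; exact Relation.ReflTransGen.refl
    | cons c t' =>
      have hc' := List.isChain_cons_cons.mp hc
      rw [List.getLast_cons (by simp : (c :: t') ≠ [])]
      rcases List.mem_cons.mp hx with rfl | hx'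
      · exact (ih hc'.2 (by simp) c (by simp)).tail hc'.1
      · exact ih hc'.2 (by simp) x hx'

lemma exists_path {p q : C} (h : netLE S p q) :
    ∃ (l : List C) (hne : l ≠ []), l.Nodup ∧ (l.Chain' fun a b => netStep S b a) ∧
      l.head hne = q ∧ l.getLast hne = p := by
  induction h with
  | refl => exact ⟨[p], by simp, List.nodup_singleton p, List.isChain_singleton p, rfl, rfl⟩
  | @tail b c hab hstep ih =>
    obtain ⟨l, hne, hnd, hch, hhd, hlast⟩ := ih
    by_cases hcmem : c ∈ l
    · obtain ⟨s, t, rfl⟩ := List.append_of_mem hcmem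
      have hsuf : (c :: t) <:+ s ++ c :: t := ⟨s, rfl⟩
      have hlast' : (c :: t).getLast (by simp) = p := by
        rw [List.getLast_append] at hlast
        simpa using hlast
      exact ⟨c :: t, by simp, hsuf.sublist.nodup hnd, hch.suffix hsuf, rfl, hlast'⟩
    · refine ⟨c :: l, by simp, List.nodup_cons.mpr ⟨hcmem, hnd⟩, ?_, rfl, ?_⟩
      · refine List.isChain_cons.mpr ⟨?_, hch⟩
        intro y hy
        rw [List.head?_eq_head hne] at hy
        obtain rfl : l.head hne = y := by simpa using hy
        rw [hhd]; exact hstep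
      · rw [List.getLast_cons hne]; exact hlast

lemma rtg_strict {p q : C} (h : netLE S p q) (hne : p ≠ q) :
    Relation.TransGen (fun a b => netStep S a b ∧ a ≠ b) p q := by
  induction h with
  | refl => exact absurd rfl hne
  | @tail b c hab hstep ih =>
    by_cases hbc : b = c
    · subst hbc; exact ih hne
    · by_cases hpb : p = b
      · subst hpb; exact Relation.TransGen.single ⟨hstep, hbc⟩
      · exact (ih hpb).tail ⟨hstep, hbc⟩

lemma no_closed_walk (hff : ¬ HasCycle S) :
    ∀ n, 1 ≤ n → ∀ a : Fin (n+1) → C,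
      (∀ i : Fin n, netStep S (a i.castSucc) (a i.succ) ∧ a i.castSucc ≠ a i.succ) →
      a 0 = a (Fin.last n) → False := by
  intro n
  induction n using Nat.strong_induction_on with
  | _ n IH =>
    intro hn a hstep hcl
    by_cases hinj : Function.Injective fun i : Fin n => a i.castSucc
    · match n, hn, a, hstep, hcl, hinj with
      | 1, _, a, hstep, hcl, _ =>
        refine (hstep 0).2 ?_
        have h0 : (0 : Fin 1).castSucc = (0 : Fin 2) := by ext; simp
        have h1 : (0 : Fin 1).succ = Fin.last 1 := by ext; simp
        rw [h0, h1]; exact hcl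
      | (k+2), _, a, hstep, hcl, hinj =>
        refine hff ⟨k, fun i => a i.castSucc, hinj, ?_, ?_⟩
        · have h := (hstep (Fin.last (k+1))).1
          rw [Fin.succ_last, ← hcl] at h
          simpa using h
        · intro i
          have h := (hstep i.castSucc).1
          rw [Fin.succ_castSucc] at h
          exact h
    · rw [Function.not_injective_iff] at hinj
      obtain ⟨i, j, heq, hne⟩ := hinj
      have cut : ∀ i j : Fin n, (i : ℕ) < (j : ℕ) → a i.castSucc = a j.castSucc → False := by
        intro i j hlt heq
        set m := (j : ℕ) - (i : ℕ) with hm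
        have hm1 : 1 ≤ m := by omega
        have hmn : m < n := by have := j.isLt; omega
        have hgen : ∀ (u : ℕ) (h1 : u < n) (h2 : u < n + 1) (h3 : u + 1 < n + 1),
            netStep S (a ⟨u, h2⟩) (a ⟨u+1, h3⟩) ∧ a ⟨u, h2⟩ ≠ a ⟨u+1, h3⟩ := by
          intro u h1 h2 h3
          have h := hstep ⟨u, h1⟩
          have e1 : (⟨u, h1⟩ : Fin n).castSucc = (⟨u, h2⟩ : Fin (n+1)) := rfl
          have e2 : (⟨u, h1⟩ : Fin n).succ = (⟨u+1, h3⟩ : Fin (n+1)) := rfl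
          rwa [e1, e2] at h
        refine IH m hmn hm1
          (fun t => a ⟨(i : ℕ) + (t : ℕ), by have := t.isLt; have := j.isLt; omega⟩) ?_ ?_
        · intro t
          exact hgen ((i : ℕ) + (t : ℕ)) (by have := t.isLt; have := j.isLt; omega) _ _
        · exact (congrArg a (Fin.ext (by simp))).trans
            (heq.trans (congrArg a (Fin.ext (by simp; omega))))
      rcases Ne.lt_or_gt hne with hlt | hlt
      · exact cut i j hlt heq
      · exact cut j i hlt heq.symm

lemma netLE_antisymm (hff : ¬ HasCycle S) {p q : C} (h1 : netLE S p q) (h2 : netLE S q p) :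
    p = q := by
  by_contra hne
  have t1 : Relation.TransGen (fun a b => netStep S a b ∧ a ≠ b) p q := rtg_strict h1 hne
  have t2 : Relation.TransGen (fun a b => netStep S a b ∧ a ≠ b) q p :=
    rtg_strict h2 (Ne.symm hne)
  have t : Relation.TransGen (fun a b => netStep S a b ∧ a ≠ b) p p := t1.trans t2
  obtain ⟨b₀, hpb, hbp⟩ := (Relation.TransGen.head'_iff).mp t
  obtain ⟨l, hchain, hlast⟩ := List.exists_isChain_cons_of_relationReflTransGen hbp
  have hchain' : List.Chain (fun a b => netStep S a b ∧ a ≠ b) p (b₀ :: l) :=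
    List.Chain.cons hpb hchain
  have hget := List.isChain_iff_getElem.mp hchain'
  refine no_closed_walk hff (b₀ :: l).length (by simp) (p :: b₀ :: l).get ?_ ?_
  · intro i
    obtain ⟨iv, hiv⟩ := i
    match iv, hiv with
    | 0, hiv => exact hget 0 (by simp)
    | (jv+1), hiv => exact hget (jv+1) (by simpa using hiv)
  · have eA : (p :: b₀ :: l).get (0 : Fin ((b₀ :: l).length + 1)) = p := by
      have h0 : (0 : Fin ((b₀ :: l).length + 1)) =
          (⟨0, by simp⟩ : Fin ((p :: b₀ :: l).length)) := Fin.ext (by simp)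
      rw [h0]
      rfl
    have eB : (p :: b₀ :: l).get (Fin.last ((b₀ :: l).length)) = p := by
      have h1 : (Fin.last ((b₀ :: l).length)) =
          (⟨(p :: b₀ :: l).length - 1, by simp⟩ : Fin ((p :: b₀ :: l).length)) :=
        Fin.ext (by simp)
      rw [h1, List.get_eq_getElem, ← List.getLast_eq_getElem (by simp : (p :: b₀ :: l) ≠ []), List.getLast_cons (by simp : (b₀ :: l) ≠ [])]
      exact hlast
    rw [eA, eB]

lemma netLE_mem_B {B : Set C} (hB : ∀ σ ∈ S, ∀ b ∈ B, σ b ∈ B) {p q : C}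
    (h : netLE S p q) (hp : p ∈ B) : q ∈ B := by
  induction h with
  | refl => exact hp
  | tail hab hstep ih => obtain ⟨σ, hσ, rfl⟩ := hstep; exact hB σ hσ _ ih

def NSet (S : Finset (C → C)) (B : Set C) (Crit : C → Prop) (p : C) : Set ℕ :=
  {n : ℕ | ∃ b ∈ B, ∃ (k : ℕ) (ω : Fin (k + 1) → C),
    Function.Injective ω ∧ ω 0 = b ∧ ω (Fin.last k) = p ∧
    (∀ i : Fin k, netStep S (ω i.succ) (ω i.castSucc)) ∧
    n = (Finset.univ.filter fun i : Fin (k + 1) =>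
      Crit (ω i) ∧ ω i ∉ B).card}

lemma card_eq_countP (Crit : C → Prop) (B : Set C) :
    ∀ (m : ℕ) (ω : Fin m → C),
      ((List.ofFn ω).countP fun x => decide (Crit x ∧ x ∉ B)) =
        (Finset.univ.filter fun i : Fin m => Crit (ω i) ∧ ω i ∉ B).card := by
  intro m
  induction m with
  | zero => intro ω; simp
  | succ m ih =>
    intro ω
    rw [List.ofFn_succ, List.countP_cons, ih, Finset.card_filter, Finset.card_filter,
      Fin.sum_univ_succ]
    simp only [decide_eq_true_eq]
    exact Nat.add_comm _ _

lemma countP_eq_card (Crit : C → Prop) (B : Set C) (l : List C) :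
    (l.countP fun x => decide (Crit x ∧ x ∉ B)) =
      (Finset.univ.filter fun i : Fin l.length =>
        Crit (l.get i) ∧ l.get i ∉ B).card := by
  conv_lhs => rw [← List.ofFn_get l]
  exact card_eq_countP Crit B l.length l.get

lemma countP_mem_NSet {B : Set C} {Crit : C → Prop} {p : C}
    (l : List C) (hne : l ≠ []) (hnd : l.Nodup)
    (hch : l.Chain' fun a b => netStep S b a)
    (hhd : l.head hne ∈ B) (hlast : l.getLast hne = p) :
    (l.countP fun x => decide (Crit x ∧ x ∉ B)) ∈ NSet S B Crit p := by
  obtain ⟨a, t, rfl⟩ : ∃ a t, l = a :: t := by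
    cases l with
    | nil => exact absurd rfl hne
    | cons a t => exact ⟨a, t, rfl⟩
  refine ⟨a, hhd, t.length, (a :: t).get, List.nodup_iff_injective_get.mp hnd, ?_, ?_, ?_, ?_⟩
  · exact List.get_cons_zero
  · rw [← hlast, List.getLast_eq_getElem]
    simp
  · intro i
    exact List.isChain_iff_getElem.mp hch i.val (by simp)
  · exact countP_eq_card Crit B (a :: t)

lemma NSet_toList {B : Set C} {Crit : C → Prop} {p : C} {n : ℕ}
    (hn : n ∈ NSet S B Crit p) :
    ∃ (l : List C) (hne : l ≠ []), l.Nodup ∧ (l.Chain' fun a b => netStep S b a) ∧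
      l.head hne ∈ B ∧ l.getLast hne = p ∧
      n = l.countP fun x => decide (Crit x ∧ x ∉ B) := by
  obtain ⟨b, hb, k, ω, hinj, h0, hlastω, hstep, hcard⟩ := hn
  have hlen : (List.ofFn ω).length = k + 1 := List.length_ofFn
  have hne : List.ofFn ω ≠ [] := by
    intro h; rw [h] at hlen; simp at hlen
  refine ⟨List.ofFn ω, hne, List.nodup_ofFn.mpr hinj, ?_, ?_, ?_, ?_⟩
  · rw [List.Chain', List.isChain_iff_getElem]
    intro i hi
    rw [List.getElem_ofFn, List.getElem_ofFn]
    exact hstep ⟨i, by omega⟩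
  · have hsucc : List.ofFn ω = ω 0 :: List.ofFn (fun i => ω i.succ) := List.ofFn_succ
    have h1 : (List.ofFn ω).head? = some (ω 0) := by rw [hsucc]; rfl
    have h2 : (List.ofFn ω).head? = some ((List.ofFn ω).head hne) := List.head?_eq_head hne
    have h3 : (List.ofFn ω).head hne = ω 0 := by
      rw [h1] at h2; exact (Option.some_injective _ h2).symm
    rw [h3, h0]; exact hb
  · rw [List.getLast_eq_getElem, List.getElem_ofFn, ← hlastω]
    exact congrArg _ (Fin.ext (by simp [hlen]))
  · rw [card_eq_countP Crit B (k+1) ω]; exact hcard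

lemma NSet_bddAbove {B : Set C} {Crit : C → Prop} (p : C) :
    BddAbove (NSet S B Crit p) := by
  refine ⟨Fintype.card C, ?_⟩
  rintro n ⟨b, hb, k, ω, hinj, h0, hlast, hstep, rfl⟩
  calc (Finset.univ.filter fun i : Fin (k+1) => Crit (ω i) ∧ ω i ∉ B).card
      ≤ (Finset.univ : Finset (Fin (k+1))).card := Finset.card_filter_le _ _
    _ = Fintype.card (Fin (k+1)) := Finset.card_univ
    _ ≤ Fintype.card C := Fintype.card_le_of_injective ω hinj

lemma NSet_nonempty {B : Set C} {Crit : C → Prop}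
    (hreach : ∀ p ∉ B, ∃ b ∈ B, netLE S p b) (p : C) :
    (NSet S B Crit p).Nonempty := by
  by_cases hp : p ∈ B
  · exact ⟨_, countP_mem_NSet [p] (by simp) (by simp) (List.isChain_singleton p) hp rfl⟩
  · obtain ⟨b, hb, hle⟩ := hreach p hp
    obtain ⟨l, hne, hnd, hch, hhd, hlast⟩ := exists_path hle
    exact ⟨_, countP_mem_NSet l hne hnd hch (by rw [hhd]; exact hb) hlast⟩

lemma sSup_NSet_B {B : Set C} {Crit : C → Prop}
    (hB : ∀ σ ∈ S, ∀ b ∈ B, σ b ∈ B) {q : C} (hq : q ∈ B) :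
    sSup (NSet S B Crit q) = 0 := by
  have hle : ∀ n ∈ NSet S B Crit q, n ≤ 0 := by
    intro n hn
    obtain ⟨l, hne, hnd, hch, hhd, hlast, rfl⟩ := NSet_toList hn
    have h0 : l.countP (fun x => decide (Crit x ∧ x ∉ B)) = 0 := by
      rw [List.countP_eq_zero]
      intro x hx
      have hxB : x ∈ B := netLE_mem_B hB (hlast ▸ getLast_netLE_mem hch hne x hx) hq
      simp [hxB]
    omega
  have hnonempty : (NSet S B Crit q).Nonempty :=
    ⟨_, countP_mem_NSet [q] (by simp) (by simp) (List.isChain_singleton q) hq rfl⟩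
  exact Nat.le_zero.mp (csSup_le hnonempty hle)

lemma concat_mem {B : Set C} {Crit : C → Prop} (hff : ¬ HasCycle S) {p q : C}
    (hle : netLE S p q) (hqp : q ≠ p) {n : ℕ} (hn : n ∈ NSet S B Crit q) :
    ∃ n' ∈ NSet S B Crit p, n + (if Crit p ∧ p ∉ B then 1 else 0) ≤ n' := by
  obtain ⟨l₁, hne₁, hnd₁, hch₁, hhd₁, hlast₁, rfl⟩ := NSet_toList hn
  obtain ⟨l₂, hne₂, hnd₂, hch₂, hhd₂, hlast₂⟩ := exists_path hle
  obtain ⟨x, t, rfl⟩ : ∃ x t, l₂ = x :: t := by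
    cases l₂ with
    | nil => exact absurd rfl hne₂
    | cons x t => exact ⟨x, t, rfl⟩
  have hqx : q = x := hhd₂.symm
  subst hqx
  have htne : t ≠ [] := by
    intro h; subst h
    exact hqp hlast₂
  have hchq := List.isChain_cons.mp hch₂
  have hndt : t.Nodup := (List.nodup_cons.mp hnd₂).2
  have hqt : q ∉ t := (List.nodup_cons.mp hnd₂).1
  have hdisj : ∀ y ∈ l₁, y ∉ t := by
    intro y hy hyt
    have h1 : netLE S q y := hlast₁ ▸ getLast_netLE_mem hch₁ hne₁ y hy
    have h2 : netLE S y q := mem_netLE_head hch₂ (List.mem_cons_of_mem _ hyt) hne₂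
    exact hqt (by rw [netLE_antisymm hff h1 h2]; exact hyt)
  have hl : (l₁ ++ t) ≠ [] := by simp [hne₁]
  have hnd : (l₁ ++ t).Nodup := List.Nodup.append hnd₁ hndt hdisj
  have hch : (l₁ ++ t).Chain' (fun a b => netStep S b a) := by
    rw [List.Chain', List.isChain_append]
    refine ⟨hch₁, hchq.2, ?_⟩
    intro x hx y hy
    rw [List.getLast?_eq_getLast hne₁] at hx
    obtain rfl : l₁.getLast hne₁ = x := by simpa using hx
    rw [hlast₁]
    exact hchq.1 y hy
  have hhead : (l₁ ++ t).head hl ∈ B := by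
    rw [List.head_append, dif_neg (by simp [hne₁])]
    exact hhd₁
  have hplast : t.getLast htne = p := by
    have h := List.getLast_cons (a := q) htne
    rw [← h]; exact hlast₂
  have hgetLast : (l₁ ++ t).getLast hl = p := by
    rw [List.getLast_append, dif_neg (by simp [htne])]
    exact hplast
  have hpt : p ∈ t := hplast ▸ List.getLast_mem htne
  refine ⟨(l₁ ++ t).countP (fun x => decide (Crit x ∧ x ∉ B)),
    countP_mem_NSet _ hl hnd hch hhead hgetLast, ?_⟩
  rw [List.countP_append]
  by_cases hcp : Crit p ∧ p ∉ B
  · rw [if_pos hcp]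
    have hpos : 0 < t.countP (fun x => decide (Crit x ∧ x ∉ B)) := by
      rw [List.countP_pos_iff]
      exact ⟨p, hpt, by simpa using hcp⟩
    omega
  · rw [if_neg hcp]; omega

lemma sSup_add_le {B : Set C} {Crit : C → Prop} (hff : ¬ HasCycle S)
    (hreach : ∀ p ∉ B, ∃ b ∈ B, netLE S p b) {p q : C}
    (hle : netLE S p q) (hqp : q ≠ p) :
    sSup (NSet S B Crit q) + (if Crit p ∧ p ∉ B then 1 else 0) ≤ sSup (NSet S B Crit p) := by
  have hmem : sSup (NSet S B Crit q) ∈ NSet S B Crit q :=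
    Nat.sSup_mem (NSet_nonempty hreach q) (NSet_bddAbove q)
  obtain ⟨n', hn', hle'⟩ := concat_mem hff hle hqp hmem
  exact hle'.trans (le_csSup (NSet_bddAbove p) hn')

lemma one_le_sSup {B : Set C} {Crit : C → Prop} (hff : ¬ HasCycle S)
    (hcrit : ∀ p ∉ B, (∀ q : C, netLE S p q → q ≠ p → q ∈ B) → Crit p)
    (hreach : ∀ p ∉ B, ∃ b ∈ B, netLE S p b) :
    ∀ p, p ∉ B → 1 ≤ sSup (NSet S B Crit p) := by
  haveI htrans : IsTrans C (fun a b : C => netLE S b a ∧ a ≠ b) := ⟨by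
    rintro a b c ⟨h1, h2⟩ ⟨h3, h4⟩
    refine ⟨h3.trans h1, ?_⟩
    rintro rfl
    exact h4 (netLE_antisymm hff h3 h1).symm⟩
  haveI : IsIrrefl C (fun a b : C => netLE S b a ∧ a ≠ b) := ⟨fun a h => h.2 rfl⟩
  have hwf := Finite.wellFounded_of_trans_of_irrefl (fun a b : C => netLE S b a ∧ a ≠ b)
  intro p
  refine WellFounded.induction hwf (C := fun p => p ∉ B → 1 ≤ sSup (NSet S B Crit p)) p ?_
  intro x IH hx
  by_cases hall : ∀ q : C, netLE S x q → q ≠ x → q ∈ B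
  · have hcx : Crit x := hcrit x hx hall
    obtain ⟨n, hn⟩ := NSet_nonempty (Crit := Crit) hreach x
    have hle := le_csSup (NSet_bddAbove x) hn
    obtain ⟨l, hne, hnd, hch, hhd, hlast, rfl⟩ := NSet_toList hn
    have hpos : 0 < l.countP (fun x => decide (Crit x ∧ x ∉ B)) := by
      rw [List.countP_pos_iff]
      exact ⟨x, hlast ▸ List.getLast_mem hne, by simp [hcx, hx]⟩
    omega
  · push_neg at hall
    obtain ⟨q, hq1, hq2, hq3⟩ := hall
    have h1 := IH q ⟨hq1, hq2⟩ hq3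
    have h2 := sSup_add_le (Crit := Crit) hff hreach hq1 hq2
    omega

lemma sSup_le_main {B : Set C} {Crit : C → Prop} (hff : ¬ HasCycle S)
    (hreach : ∀ p ∉ B, ∃ b ∈ B, netLE S p b) {p : C} (hp : p ∉ B) :
    sSup (NSet S B Crit p) ≤
      sSup ((fun q => sSup (NSet S B Crit q)) '' {q : C | netLE S p q ∧ q ≠ p}) +
        (if Crit p then 1 else 0) := by
  refine csSup_le (NSet_nonempty hreach p) ?_
  intro n hn
  obtain ⟨l, hne, hnd, hch, hhd, hlast, rfl⟩ := NSet_toList hn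
  have hlen2 : 2 ≤ l.length := by
    rcases l with _ | ⟨a, _ | ⟨c, t⟩⟩
    · exact absurd rfl hne
    · exact absurd (hlast ▸ hhd) hp
    · simp
  obtain ⟨l', hl'⟩ : ∃ l'', l'' = l.dropLast := ⟨_, rfl⟩
  have hl'len : l'.length = l.length - 1 := by rw [hl']; exact List.length_dropLast
  have hl'ne : l' ≠ [] := by
    intro h; rw [h] at hl'len; simp at hl'len; omega
  have hsplit : l' ++ [p] = l := by
    rw [hl', ← hlast]; exact List.dropLast_append_getLast hne
  have hch2 : (l' ++ [p]).Chain' (fun a b => netStep S b a) := by rw [hsplit]; exact hch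
  obtain ⟨hchl', -, hlink⟩ := List.isChain_append.mp hch2
  have hnd2 : (l' ++ [p]).Nodup := by rw [hsplit]; exact hnd
  have hstep : netStep S p (l'.getLast hl'ne) := by
    exact hlink (l'.getLast hl'ne) (by simp [List.getLast?_eq_getLast hl'ne]) p rfl
  have hqp : l'.getLast hl'ne ≠ p := by
    intro h
    have hdisj := (List.nodup_append.mp hnd2).2.2
    exact hdisj _ (List.getLast_mem hl'ne) p (by simp) h
  have hqmem : l'.getLast hl'ne ∈ {q : C | netLE S p q ∧ q ≠ p} :=
    ⟨Relation.ReflTransGen.single hstep, hqp⟩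
  have hhead' : l'.head hl'ne ∈ B := by
    obtain ⟨a, t', rfl⟩ : ∃ a t', l' = a :: t' := by
      cases l' with
      | nil => exact absurd rfl hl'ne
      | cons a t' => exact ⟨a, t', rfl⟩
    have h1 : l.head? = some a := by rw [← hsplit]; rfl
    have h2 : l.head? = some (l.head hne) := List.head?_eq_head hne
    have h3 : l.head hne = a := by
      rw [h1] at h2; exact (Option.some_injective _ h2).symm
    show a ∈ B
    rw [← h3]; exact hhd
  have hcount' := countP_mem_NSet (B := B) (Crit := Crit) l' hl'ne
    (List.nodup_append.mp hnd2).1 hchl' hhead' rfl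
  have hA : l.countP (fun x => decide (Crit x ∧ x ∉ B)) =
      l'.countP (fun x => decide (Crit x ∧ x ∉ B)) + (if Crit p then 1 else 0) := by
    rw [← hsplit, List.countP_append]
    simp [List.countP_cons, hp]
  rw [hA]
  have h1 : l'.countP (fun x => decide (Crit x ∧ x ∉ B)) ≤
      sSup (NSet S B Crit (l'.getLast hl'ne)) :=
    le_csSup (NSet_bddAbove _) hcount'
  have h2 : sSup (NSet S B Crit (l'.getLast hl'ne)) ≤
      sSup ((fun q => sSup (NSet S B Crit q)) '' {q : C | netLE S p q ∧ q ≠ p}) :=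
    le_csSup (Set.Finite.bddAbove (Set.toFinite _)) (Set.mem_image_of_mem _ hqmem)
  exact Nat.add_le_add (h1.trans h2) le_rfl

end FFAux


/-- Equivalence of the path-counting definition (3.4) of the amplification
number `μ_p` with its iterative characterization (3.5):  `μ_p = 0` on the
subnetwork `B`, and otherwise `μ_p` is one less than the maximal number of
critical non-`B` cells along loop-free paths from `B` to `p`; iteratively,
`μ_p = 0` if all cells strictly above `p` lie in `B`, `μ_p = max_{q ⊳ p} μ_q`
if `p` is non-critical, and `μ_p = max_{q ⊳ p} μ_q + 1` if `p ∉ B` is critical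
with some `q ⊳ p` outside `B`. -/
theorem mu_recursion {C : Type*} [Fintype C] [DecidableEq C]
    (S : Finset (C → C)) (hid : (id : C → C) ∈ S) (hff : ¬ HasCycle S)
    (B : Set C) (hB : ∀ σ ∈ S, ∀ b ∈ B, σ b ∈ B)
    (Crit : C → Prop)
    (hcrit : ∀ p ∉ B, (∀ q : C, netLE S p q → q ≠ p → q ∈ B) → Crit p)
    (hreach : ∀ p ∉ B, ∃ b ∈ B, netLE S p b)
    (μ : C → ℕ)
    (hμ : ∀ p : C, μ p = if p ∈ B then 0 else
      sSup {n : ℕ | ∃ b ∈ B, ∃ (k : ℕ) (ω : Fin (k + 1) → C),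
        Function.Injective ω ∧ ω 0 = b ∧ ω (Fin.last k) = p ∧
        (∀ i : Fin k, netStep S (ω i.succ) (ω i.castSucc)) ∧
        n = (Finset.univ.filter fun i : Fin (k + 1) =>
          Crit (ω i) ∧ ω i ∉ B).card} - 1) :
    (∀ p ∈ B, μ p = 0) ∧
    (∀ p ∉ B, (∀ q : C, netLE S p q → q ≠ p → q ∈ B) → μ p = 0) ∧
    (∀ p ∉ B, ¬ Crit p → μ p = sSup (μ '' {q : C | netLE S p q ∧ q ≠ p})) ∧
    (∀ p ∉ B, Crit p → (∃ q : C, netLE S p q ∧ q ≠ p ∧ q ∉ B) →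
      μ p = sSup (μ '' {q : C | netLE S p q ∧ q ≠ p}) + 1) := by
  have hμB : ∀ p ∈ B, μ p = 0 := fun p hp => by rw [hμ p, if_pos hp]
  have hμN : ∀ p, p ∉ B → μ p = sSup (FFAux.NSet S B Crit p) - 1 := fun p hp => by
    rw [hμ p, if_neg hp]; rfl
  -- the image of μ over cells strictly above p
  have himg : ∀ p : C, (∃ q₀ : C, (netLE S p q₀ ∧ q₀ ≠ p) ∧ q₀ ∉ B) →
      sSup (μ '' {q : C | netLE S p q ∧ q ≠ p}) =
        sSup ((fun q => sSup (FFAux.NSet S B Crit q)) ''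
          {q : C | netLE S p q ∧ q ≠ p}) - 1 := by
    rintro p ⟨q₀, hq₀A, hq₀B⟩
    have hAne : {q : C | netLE S p q ∧ q ≠ p}.Nonempty := ⟨q₀, hq₀A⟩
    have hbddμ : BddAbove (μ '' {q : C | netLE S p q ∧ q ≠ p}) :=
      Set.Finite.bddAbove (Set.toFinite _)
    have hbddM : BddAbove ((fun q => sSup (FFAux.NSet S B Crit q)) ''
        {q : C | netLE S p q ∧ q ≠ p}) := Set.Finite.bddAbove (Set.toFinite _)
    apply le_antisymm
    · refine csSup_le (hAne.image _) ?_
      rintro m ⟨q, hqA, rfl⟩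
      by_cases hqB : q ∈ B
      · rw [hμB q hqB]; exact Nat.zero_le _
      · rw [hμN q hqB]
        have h := le_csSup hbddM (Set.mem_image_of_mem _ hqA)
        omega
    · obtain ⟨q₁, hq₁A, hq₁⟩ := Nat.sSup_mem (hAne.image _) hbddM
      by_cases hq₁B : q₁ ∈ B
      · rw [← hq₁]
        have h0 : sSup (FFAux.NSet S B Crit q₁) = 0 := FFAux.sSup_NSet_B hB hq₁B
        simp only [h0]
        exact Nat.zero_le _
      · have hμq₁ : μ q₁ = sSup (FFAux.NSet S B Crit q₁) - 1 := hμN q₁ hq₁B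
        calc sSup ((fun q => sSup (FFAux.NSet S B Crit q)) ''
              {q : C | netLE S p q ∧ q ≠ p}) - 1
            = μ q₁ := by rw [hμq₁]; exact congrArg (fun z => z - 1) hq₁.symm
          _ ≤ sSup (μ '' {q : C | netLE S p q ∧ q ≠ p}) :=
              le_csSup hbddμ (Set.mem_image_of_mem μ hq₁A)
  -- the key recursion for the sup over path counts
  have hkey : ∀ p, p ∉ B → ({q : C | netLE S p q ∧ q ≠ p}).Nonempty →
      sSup (FFAux.NSet S B Crit p) =
        sSup ((fun q => sSup (FFAux.NSet S B Crit q)) '' {q : C | netLE S p q ∧ q ≠ p}) +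
          (if Crit p then 1 else 0) := by
    intro p hp hAne
    apply le_antisymm
    · exact FFAux.sSup_le_main hff hreach hp
    · obtain ⟨q₁, hq₁A, hq₁⟩ :=
        Nat.sSup_mem (hAne.image (fun q => sSup (FFAux.NSet S B Crit q)))
          (Set.Finite.bddAbove (Set.toFinite _))
      have h := FFAux.sSup_add_le (Crit := Crit) hff hreach hq₁A.1 hq₁A.2
      have hite : (if Crit p ∧ p ∉ B then 1 else 0) = (if Crit p then 1 else 0) := by
        by_cases h' : Crit p <;> simp [h', hp]
      rw [hite] at h
      exact le_trans (Nat.add_le_add (le_of_eq hq₁.symm) le_rfl) h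
  refine ⟨hμB, ?_, ?_, ?_⟩
  · -- all cells strictly above p lie in B
    intro p hp hall
    rw [hμN p hp]
    have hle1 : sSup (FFAux.NSet S B Crit p) ≤ 1 := by
      refine csSup_le (FFAux.NSet_nonempty (Crit := Crit) hreach p) ?_
      intro n hn
      obtain ⟨l, hne, hnd, hch, hhd, hlast, rfl⟩ := FFAux.NSet_toList hn
      have h1 : l.countP (fun x => decide (Crit x ∧ x ∉ B)) ≤
          l.countP (fun x => x == p) := by
        apply List.countP_mono_left
        intro x hx hpred
        simp only [decide_eq_true_eq] at hpred
        simp only [beq_iff_eq]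
        by_contra hxp
        exact hpred.2 (hall x (hlast ▸ FFAux.getLast_netLE_mem hch hne x hx) hxp)
      have h2 : l.countP (fun x => x == p) = 1 := by
        rw [← List.count_eq_countP]
        exact List.count_eq_one_of_mem hnd (hlast ▸ List.getLast_mem hne)
      omega
    omega
  · -- non-critical case
    intro p hp hnc
    have hex : ∃ q₀ : C, (netLE S p q₀ ∧ q₀ ≠ p) ∧ q₀ ∉ B := by
      by_contra hcon
      push_neg at hcon
      exact hnc (hcrit p hp fun q h1 h2 => hcon q ⟨h1, h2⟩)
    obtain ⟨q₀, hq₀A, hq₀B⟩ := hex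
    rw [hμN p hp, hkey p hp ⟨q₀, hq₀A⟩, himg p ⟨q₀, hq₀A, hq₀B⟩, if_neg hnc]
    omega
  · -- critical case
    rintro p hp hc ⟨q₀, h1, h2, h3⟩
    have hone : 1 ≤ sSup (FFAux.NSet S B Crit q₀) :=
      FFAux.one_le_sSup hff hcrit hreach q₀ h3
    have hup : sSup (FFAux.NSet S B Crit q₀) ≤
        sSup ((fun q => sSup (FFAux.NSet S B Crit q)) '' {q : C | netLE S p q ∧ q ≠ p}) :=
      le_csSup (Set.Finite.bddAbove (Set.toFinite _))
        (Set.mem_image_of_mem _ ⟨h1, h2⟩)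
    rw [hμN p hp, hkey p hp ⟨q₀, h1, h2⟩, himg p ⟨q₀, ⟨h1, h2⟩, h3⟩, if_pos hc]
    omega
end
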